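/- Let C_0 be the complete d-clutter on a finite vertex set V with |V| ≥ d + 1, and let F ∈ C_0. Then the d-clutter C = C_0 \ {F}, obtained from the complete clutter by deleting exactly one circuit, is chordal. -/

import Mathlib

namespace ClutterPaper

variable {α : Type*} [DecidableEq α]

/-- `C` is a uniform clutter on vertex set `V` all of whose circuits have cardinality `c`
(i.e. a `(c-1)`-dimensional uniform clutter). -/
def IsClutter (V : Finset α) (c : ℕ) (C : Finset (Finset α)) : Prop :=
  ∀ F ∈ C, F ⊆ V ∧ F.card = c

/-- The complement clutter `C̄`: all `c`-subsets of `V` not in `C`. -/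
def compClutter (V : Finset α) (c : ℕ) (C : Finset (Finset α)) : Finset (Finset α) :=
  V.powersetCard c \ C

/-- `C^∨ = { V \ F | F ∈ C̄ }`. -/
def clutterDual (V : Finset α) (c : ℕ) (C : Finset (Finset α)) : Finset (Finset α) :=
  (compClutter V c C).image fun F => V \ F

/-- `A` is a clique of the clutter `C` (with circuit cardinality `c`) on vertex set `V`:
all `c`-subsets of `A` are circuits. -/
def IsClique (V : Finset α) (c : ℕ) (C : Finset (Finset α)) (A : Finset α) : Prop :=
  A ⊆ V ∧ ∀ F ⊆ A, F.card = c → F ∈ C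

/-- The closed neighborhood `N_C[e] = e ∪ { v ∈ V | e ∪ {v} ∈ C }`. -/
def closedNbhd (V : Finset α) (C : Finset (Finset α)) (e : Finset α) : Finset α :=
  e ∪ V.filter fun v => insert v e ∈ C

/-- `e` is a maximal subcircuit of the clutter `C` with circuit cardinality `c`:
`e` has cardinality `c - 1` and is contained in some circuit. -/
def IsMS (c : ℕ) (C : Finset (Finset α)) (e : Finset α) : Prop :=
  e.card + 1 = c ∧ ∃ F ∈ C, e ⊆ F

/-- `e` is a simplicial maximal subcircuit: a maximal subcircuit whose closed
neighborhood is a clique. -/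
def IsSMS (V : Finset α) (c : ℕ) (C : Finset (Finset α)) (e : Finset α) : Prop :=
  IsMS c C e ∧ IsClique V c C (closedNbhd V C e)

/-- `e` is a free maximal subcircuit: contained in exactly one circuit. -/
def IsFreeMS (c : ℕ) (C : Finset (Finset α)) (e : Finset α) : Prop :=
  e.card + 1 = c ∧ ∃! F, F ∈ C ∧ e ⊆ F

/-- Deletion `C − e` of a maximal subcircuit: the circuits not containing `e`. -/
def delMS (C : Finset (Finset α)) (e : Finset α) : Finset (Finset α) :=
  C.filter fun F => ¬ e ⊆ F

/-- Deletion of a vertex: circuits (or faces) not containing `v`. -/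
def delVert (C : Finset (Finset α)) (v : α) : Finset (Finset α) :=
  C.filter fun F => v ∉ F

/-- Chordality of a uniform clutter (circuit cardinality `c`) on `V`: there is a sequence of
deletions of simplicial maximal subcircuits ending in the clutter with no circuits. -/
inductive Chordal (V : Finset α) (c : ℕ) : Finset (Finset α) → Prop
  | empty : Chordal V c ∅
  | step {C : Finset (Finset α)} (e : Finset α) :
      IsSMS V c C e → Chordal V c (delMS C e) → Chordal V c C

/-- The ascent `C⁺` of a clutter with circuit cardinality `c`: all `(c+1)`-subsets of `V`
that are cliques of `C`. -/
def ascent (V : Finset α) (c : ℕ) (C : Finset (Finset α)) : Finset (Finset α) :=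
  (V.powersetCard (c + 1)).filter fun A => A.powersetCard c ⊆ C

/-- The simplicial complex `⟨D⟩` generated by a clutter `D`: all subsets of its elements. -/
def complexOf (D : Finset (Finset α)) : Finset (Finset α) :=
  D.biUnion Finset.powerset

/-- A family of finsets is a simplicial complex if it is downward closed. -/
def IsComplex (Δ : Finset (Finset α)) : Prop :=
  ∀ F ∈ Δ, ∀ G ⊆ F, G ∈ Δ

/-- The facets (maximal faces) of a simplicial complex. -/
def facets (Δ : Finset (Finset α)) : Finset (Finset α) :=
  Δ.filter fun F => ∀ G ∈ Δ, F ⊆ G → F = G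

/-- `link_Δ(v) = { F \ {v} | v ∈ F ∈ Δ }`. -/
def link (Δ : Finset (Finset α)) (v : α) : Finset (Finset α) :=
  (Δ.filter fun F => v ∈ F).image fun F => F.erase v

/-- `v` is a shedding vertex of `Δ`: no face of `link_Δ(v)` is a facet of `Δ − v`. -/
def Shedding (Δ : Finset (Finset α)) (v : α) : Prop :=
  ∀ F ∈ link Δ v, F ∉ facets (delVert Δ v)

/-- Alexander dual of a simplicial complex on vertex set `V`:
`Δ^∨ = { V \ F | F ⊆ V, F ∉ Δ }`. -/
def alexDual (V : Finset α) (Δ : Finset (Finset α)) : Finset (Finset α) :=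
  (V.powerset.filter fun F => F ∉ Δ).image fun F => V \ F

/-- `Δ` is pure with all facets of cardinality `c` (dimension `c - 1`), and nonempty. -/
def PureDim (Δ : Finset (Finset α)) (c : ℕ) : Prop :=
  Δ.Nonempty ∧ ∀ F ∈ facets Δ, F.card = c

/-- Vertex decomposability of a simplicial complex. -/
inductive VDecomp : Finset (Finset α) → Prop
  | simplex {Δ : Finset (Finset α)} : (facets Δ).card = 1 → VDecomp Δ
  | shed {Δ : Finset (Finset α)} (v : α) : Shedding Δ v →
      VDecomp (link Δ v) → VDecomp (delVert Δ v) → VDecomp Δ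

/-- The vertex set of a clutter (or of the complex it generates). -/
def vertexSet (Ω : Finset (Finset α)) : Finset α :=
  Ω.biUnion id

/-- `Ω` (given by its set of facets, each of cardinality `d+1`) is a `d`-cycle:
nonempty, pure of dimension `d`, `d`-path connected, and every `(d-1)`-dimensional
face lies in an even number of `d`-faces. -/
def IsCycle (d : ℕ) (Ω : Finset (Finset α)) : Prop :=
  Ω.Nonempty ∧ (∀ F ∈ Ω, F.card = d + 1) ∧
    (∀ F ∈ Ω, ∀ G ∈ Ω,
      Relation.ReflTransGen (fun A B => A ∈ Ω ∧ B ∈ Ω ∧ (A ∩ B).card = d) F G) ∧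
    ∀ e : Finset α, e.card = d → Even ((Ω.filter fun F => e ⊆ F).card)

/-- A face-minimal `d`-cycle: no `d`-cycle has a strictly smaller set of `d`-faces. -/
def FaceMinimalCycle (d : ℕ) (Ω : Finset (Finset α)) : Prop :=
  IsCycle d Ω ∧ ∀ Ω' : Finset (Finset α), IsCycle d Ω' → Ω' ⊆ Ω → Ω' = Ω

/-- `Ω` is `d`-complete: it contains every `(d+1)`-subset of its vertex set. -/
def DComplete (d : ℕ) (Ω : Finset (Finset α)) : Prop :=
  ∀ F ⊆ vertexSet Ω, F.card = d + 1 → F ∈ Ω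

/-- The complex `⟨C⟩` generated by the `d`-dimensional clutter `C` is `d`-chorded. -/
def Chorded (d : ℕ) (C : Finset (Finset α)) : Prop :=
  ∀ Ω : Finset (Finset α), FaceMinimalCycle d Ω → Ω ⊆ C → ¬ DComplete d Ω →
    ∃ (k : ℕ) (Ωs : Fin k → Finset (Finset α)), 2 ≤ k ∧
      (∀ i, IsCycle d (Ωs i) ∧ Ωs i ⊆ C) ∧
      (∀ F ∈ Ω, ∃ i, F ∈ Ωs i) ∧
      (∀ F ∈ Ω, Odd ((Finset.univ.filter fun i => F ∈ Ωs i).card)) ∧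
      (∀ F : Finset α, (∃ i, F ∈ Ωs i) → F ∉ Ω →
        Even ((Finset.univ.filter fun i => F ∈ Ωs i).card)) ∧
      ∀ i, vertexSet (Ωs i) ⊂ vertexSet Ω

/-- The circuits of `D` admit an admissible order. -/
def HasAdmissibleOrder (D : Finset (Finset α)) : Prop :=
  ∃ (t : ℕ) (F : Fin t → Finset α), Function.Injective F ∧
    (∀ G, G ∈ D ↔ ∃ i, F i = G) ∧
    ∀ i j : Fin t, j < i →
      ∃ l ∈ F j \ F i, ∃ k : Fin t, k < i ∧ F k \ F i = {l}

/-- Contraction `D/v` of a (not necessarily uniform) clutter: the minimal sets of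
`{ e \ {v} | e ∈ D }`. -/
def contractAux (D : Finset (Finset α)) (v : α) : Finset (Finset α) :=
  D.image fun e => e.erase v

def contract (D : Finset (Finset α)) (v : α) : Finset (Finset α) :=
  (contractAux D v).filter fun e => ∀ f ∈ contractAux D v, f ⊆ e → f = e

/-- `D` has a simplicial vertex (trivially true if `D` has no vertices). -/
def HasSimpVertex (D : Finset (Finset α)) : Prop :=
  vertexSet D = ∅ ∨ ∃ v ∈ vertexSet D, ∀ e₁ ∈ D, ∀ e₂ ∈ D, v ∈ e₁ → v ∈ e₂ →
    ∃ e₃ ∈ D, e₃ ⊆ (e₁ ∪ e₂).erase v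

/-- `D` is W-chordal: every clutter obtained from `D` by a sequence of vertex deletions
and contractions has a simplicial vertex. -/
def WChordal (D : Finset (Finset α)) : Prop :=
  ∀ D' : Finset (Finset α),
    Relation.ReflTransGen (fun X Y => ∃ v, Y = delVert X v ∨ Y = contract X v) D D' →
    HasSimpVertex D'

/-- All `(d+1)`-subsets of `V` not containing `a`. -/
def Ca (V : Finset α) (d : ℕ) (a : Finset α) : Finset (Finset α) :=
  (V.powersetCard (d+1)).filter fun G => ¬ a ⊆ G

/-- Intermediate clutters in a phase. -/
def CP (V : Finset α) (d : ℕ) (b : Finset α) (x : α) (P : Finset (Finset α)) :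
    Finset (Finset α) :=
  (V.powersetCard (d+1)).filter fun G => ¬ insert x b ⊆ G ∧ ∀ S ∈ P, ¬ b ∪ S ⊆ G

lemma mem_Ca {V : Finset α} {d : ℕ} {a G : Finset α} :
    G ∈ Ca V d a ↔ (G ⊆ V ∧ G.card = d + 1) ∧ ¬ a ⊆ G := by
  simp [Ca, Finset.mem_filter, Finset.mem_powersetCard, and_assoc]

lemma mem_CP {V : Finset α} {d : ℕ} {b : Finset α} {x : α} {P : Finset (Finset α)}
    {G : Finset α} :
    G ∈ CP V d b x P ↔
      (G ⊆ V ∧ G.card = d + 1) ∧ ¬ insert x b ⊆ G ∧ ∀ S ∈ P, ¬ b ∪ S ⊆ G := by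
  simp [CP, Finset.mem_filter, Finset.mem_powersetCard, and_assoc]

section LO
variable [LinearOrder α]

local notation "tc" => toColex

lemma colex_exchange {S S' : Finset α} (hcard : S'.card = S.card)
    (h : tc S' < tc S) :
    ∃ s ∈ S, ∃ w ∈ S', w ∉ S ∧ tc (insert w (S.erase s)) < tc S := by
  obtain ⟨s, hsS, hsS', hmax⟩ := Finset.Colex.toColex_lt_toColex_iff_exists_forall_lt.1 h
  have hne : (S' \ S).Nonempty := by
    rw [← Finset.card_pos, Finset.card_sdiff_comm hcard]
    exact Finset.card_pos.2 ⟨s, Finset.mem_sdiff.2 ⟨hsS, hsS'⟩⟩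
  obtain ⟨w, hw⟩ := hne
  rw [Finset.mem_sdiff] at hw
  have hws : w < s := hmax w hw.1 hw.2
  refine ⟨s, hsS, w, hw.1, hw.2, ?_⟩
  refine Finset.Colex.toColex_lt_toColex_iff_exists_forall_lt.2 ⟨s, hsS, ?_, ?_⟩
  · simp only [Finset.mem_insert, Finset.mem_erase, not_or]
    exact ⟨hws.ne', fun hc => hc.1 rfl⟩
  · intro b hb hbS
    rcases Finset.mem_insert.1 hb with rfl | hb'
    · exact hws
    · exact absurd (Finset.mem_of_mem_erase hb') hbS


lemma phase (V : Finset α) (d : ℕ) (b : Finset α) (x : α) (hbV : b ⊆ V) (hxV : x ∈ V)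
    (hxb : x ∉ b) (k : ℕ) (hk : b.card + k = d)
    (hbase : Chordal V (d+1) (Ca V d b)) :
    Chordal V (d+1) (Ca V d (insert x b)) := by
  set a := insert x b with ha
  set allK := (V \ a).powersetCard k with hallK
  have hSsub : ∀ S ∈ allK, S ⊆ V \ a ∧ S.card = k := by
    intro S hS; exact Finset.mem_powersetCard.1 hS
  suffices H : ∀ n (rem : Finset (Finset α)), rem.card = n → rem ⊆ allK →
      (∀ T ∈ allK, T ∉ rem → ∀ S ∈ rem, tc T < tc S) →
      Chordal V (d+1) (CP V d b x (allK \ rem)) by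
    have h0 : Ca V d a = CP V d b x (allK \ allK) := by
      rw [Finset.sdiff_self]
      ext G
      simp [mem_Ca, mem_CP, ha]
    rw [h0]
    exact H allK.card allK rfl Finset.Subset.rfl (fun T hT hT2 => absurd hT hT2)
  intro n
  induction n with
  | zero =>
    intro rem hcard _ _
    rw [Finset.card_eq_zero] at hcard
    subst hcard
    rw [Finset.sdiff_empty]
    have heq : CP V d b x allK = Ca V d b := by
      ext G
      rw [mem_CP, mem_Ca]
      constructor
      · rintro ⟨hG, hna, hall⟩
        refine ⟨hG, fun hbG => ?_⟩
        have hxG : x ∉ G := fun hxG => hna (Finset.insert_subset hxG hbG)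
        have hGb : G \ b ⊆ V \ a := by
          intro y hy
          rw [Finset.mem_sdiff] at hy ⊢
          refine ⟨hG.1 hy.1, ?_⟩
          rw [ha, Finset.mem_insert]
          rintro (rfl | hyb)
          · exact hxG hy.1
          · exact hy.2 hyb
        have hcards : k ≤ (G \ b).card := by
          rw [Finset.card_sdiff_of_subset hbG, hG.2]
          omega
        obtain ⟨S, hSsub', hScard⟩ := Finset.exists_subset_card_eq hcards
        have hSK : S ∈ allK := Finset.mem_powersetCard.2 ⟨hSsub'.trans hGb, hScard⟩
        exact hall S hSK (Finset.union_subset hbG (hSsub'.trans (Finset.sdiff_subset)))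
      · rintro ⟨hG, hnb⟩
        refine ⟨hG, fun hc => hnb ((Finset.subset_insert x b).trans hc), fun S _ hc => hnb (Finset.union_subset_iff.1 hc).1⟩
    rw [heq]
    exact hbase
  | succ n ih =>
    intro rem hcard hremK hseg
    have hne : rem.Nonempty := Finset.card_pos.1 (by omega)
    obtain ⟨S, hSrem, hmin⟩ := Finset.exists_min_image rem (fun S => tc S) hne
    have hSallK : S ∈ allK := hremK hSrem
    have hSVa : S ⊆ V \ a := (hSsub S hSallK).1
    have hScard : S.card = k := (hSsub S hSallK).2
    set P := allK \ rem with hP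
    set rem' := rem.erase S with hrem'
    have hP' : allK \ rem' = insert S P := by
      ext T
      simp only [hrem', hP, Finset.mem_sdiff, Finset.mem_erase, Finset.mem_insert, not_and]
      constructor
      · rintro ⟨hT, h2⟩
        by_cases hTS : T = S
        · exact Or.inl hTS
        · exact Or.inr ⟨hT, fun hr => absurd hr (by intro hr'; exact absurd (h2 hTS) (fun hh => hh hr'))⟩
      · rintro (rfl | ⟨hT, hTr⟩)
        · exact ⟨hSallK, fun h => absurd hSrem (fun _ => h rfl)⟩
        · exact ⟨hT, fun _ _ => hTr ‹_›⟩
    have hseg' : ∀ T ∈ allK, T ∉ rem' → ∀ S₁ ∈ rem', tc T < tc S₁ := by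
      intro T hT hTr' S₁ hS₁
      rw [hrem', Finset.mem_erase] at hS₁
      by_cases hTrem : T ∈ rem
      · have hTS : T = S := by
          by_contra hTS
          exact hTr' (Finset.mem_erase.2 ⟨hTS, hTrem⟩)
        subst hTS
        refine lt_of_le_of_ne (hmin S₁ hS₁.2) ?_
        intro hEq
        exact hS₁.1 (toColex.injective hEq.symm)
      · exact hseg T hT hTrem S₁ hS₁.2
    have hih := ih rem' (by rw [hrem', Finset.card_erase_of_mem hSrem, hcard]; rfl)
      ((Finset.erase_subset _ _).trans hremK) hseg'
    rw [hP'] at hih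
    -- key facts about membership in P
    have hPfact : ∀ S' ∈ P, S' ∈ allK ∧ S' ∉ rem := fun S' hS' => Finset.mem_sdiff.1 hS'
    set e' := b ∪ S with he'
    have hxS : x ∉ S := fun hxS => (Finset.mem_sdiff.1 (hSVa hxS)).2 (Finset.mem_insert_self x b)
    have hxe' : x ∉ e' := by
      rw [he', Finset.mem_union]; rintro (h | h); exact hxb h; exact hxS h
    have hbS : Disjoint b S := by
      rw [Finset.disjoint_right]
      intro y hyS hyb
      exact (Finset.mem_sdiff.1 (hSVa hyS)).2 (Finset.mem_insert_of_mem hyb)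
    have he'card : e'.card = d := by
      rw [he', Finset.card_union_of_disjoint hbS, hScard, hk]
    have he'V : e' ⊆ V := Finset.union_subset hbV (hSVa.trans (Finset.sdiff_subset))
    have hdel : delMS (CP V d b x P) e' = CP V d b x (insert S P) := by
      ext G
      rw [delMS, Finset.mem_filter, mem_CP, mem_CP]
      constructor
      · rintro ⟨⟨hG, hna, hall⟩, hne'⟩
        refine ⟨hG, hna, fun S₁ hS₁ => ?_⟩
        rcases Finset.mem_insert.1 hS₁ with rfl | hS₁'
        · exact hne'
        · exact hall S₁ hS₁'
      · rintro ⟨hG, hna, hall⟩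
        exact ⟨⟨hG, hna, fun S₁ hS₁ => hall S₁ (Finset.mem_insert_of_mem hS₁)⟩,
          hall S (Finset.mem_insert_self S P)⟩
    by_cases hex : ∃ G ∈ CP V d b x P, e' ⊆ G
    · obtain ⟨G₀, hG₀, hG₀e⟩ := hex
      refine Chordal.step e' ⟨⟨by omega, ⟨G₀, hG₀, hG₀e⟩⟩, ?_⟩ (by rw [hdel]; exact hih)
      -- cliqueness of the closed neighborhood
      set N := closedNbhd V (CP V d b x P) e' with hN
      have hNV : N ⊆ V := Finset.union_subset he'V (Finset.filter_subset _ _)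
      have hxN : x ∉ N := by
        rw [hN, closedNbhd, Finset.mem_union, Finset.mem_filter]
        rintro (h | ⟨_, h⟩)
        · exact hxe' h
        · rw [mem_CP] at h
          exact h.2.1 (Finset.insert_subset_insert x Finset.subset_union_left) 
      have hkey : ∀ S' ∈ P, ∃ w ∈ S', w ∉ N := by
        intro S' hS'
        obtain ⟨hS'K, hS'rem⟩ := hPfact S' hS'
        have hS'card : S'.card = k := (hSsub S' hS'K).2
        have hlt : tc S' < tc S := hseg S' hS'K hS'rem S hSrem
        obtain ⟨s, hsS, w, hwS', hwS, hcolex⟩ :=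
          colex_exchange (by rw [hS'card, hScard]) hlt
        set S'' := insert w (S.erase s) with hS''
        have hwVa : w ∈ V \ a := (hSsub S' hS'K).1 hwS'
        have hS''K : S'' ∈ allK := by
          refine Finset.mem_powersetCard.2 ⟨?_, ?_⟩
          · exact Finset.insert_subset hwVa ((Finset.erase_subset _ _).trans hSVa)
          · rw [hS'', Finset.card_insert_of_notMem (fun hc => hwS (Finset.mem_of_mem_erase hc)),
              Finset.card_erase_add_one hsS, hScard]
        have hS''P : S'' ∈ P := by
          rw [hP, Finset.mem_sdiff]
          refine ⟨hS''K, fun hc => ?_⟩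
          exact absurd (hmin S'' hc) (not_le_of_gt hcolex)
        have hwb : w ∉ b := fun hc => (Finset.mem_sdiff.1 hwVa).2 (Finset.mem_insert_of_mem hc)
        have hwe' : w ∉ e' := by
          rw [he', Finset.mem_union]; rintro (h | h); exact hwb h; exact hwS h
        refine ⟨w, hwS', ?_⟩
        rw [hN, closedNbhd, Finset.mem_union, Finset.mem_filter]
        rintro (h | ⟨_, h⟩)
        · exact hwe' h
        · rw [mem_CP] at h
          refine h.2.2 S'' hS''P ?_
          rw [he']
          refine Finset.union_subset ?_ ?_
          · exact (Finset.subset_union_left).trans (Finset.subset_insert _ _)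
          · rw [hS'']
            refine Finset.insert_subset (Finset.mem_insert_self _ _) ?_
            exact ((Finset.erase_subset _ _).trans Finset.subset_union_right).trans
              (Finset.subset_insert _ _)
      refine ⟨hNV, fun G hGN hGcard => ?_⟩
      rw [mem_CP]
      refine ⟨⟨hGN.trans hNV, hGcard⟩, ?_, ?_⟩
      · intro hc
        exact hxN (hGN (hc (Finset.mem_insert_self x b)))
      · intro S' hS' hc
        obtain ⟨w, hwS', hwN⟩ := hkey S' hS'
        exact hwN (hGN (hc (Finset.mem_union_right b hwS')))
    · have heq : CP V d b x (insert S P) = CP V d b x P := by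
        ext G
        rw [mem_CP, mem_CP]
        constructor
        · rintro ⟨hG, hna, hall⟩
          exact ⟨hG, hna, fun S₁ hS₁ => hall S₁ (Finset.mem_insert_of_mem hS₁)⟩
        · rintro ⟨hG, hna, hall⟩
          refine ⟨hG, hna, fun S₁ hS₁ => ?_⟩
          rcases Finset.mem_insert.1 hS₁ with rfl | hS₁'
          · exact fun hc => hex ⟨G, mem_CP.2 ⟨hG, hna, hall⟩, hc⟩
          · exact hall S₁ hS₁'
      rw [← heq]
      exact hih


lemma ca_chordal (V : Finset α) (d : ℕ) :
    ∀ n (a : Finset α), a.card = n → a ⊆ V → a.card ≤ d + 1 → Chordal V (d+1) (Ca V d a) := by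
  intro n
  induction n with
  | zero =>
    intro a hcard _ _
    rw [Finset.card_eq_zero] at hcard; subst hcard
    have h0 : Ca V d (∅ : Finset α) = ∅ :=
      Finset.filter_false_of_mem (fun G _ => not_not_intro (Finset.empty_subset G))
    rw [h0]; exact Chordal.empty
  | succ n ih =>
    intro a hcard haV hle
    obtain ⟨x, hx⟩ : a.Nonempty := Finset.card_pos.1 (by omega)
    have hb : (a.erase x).card = n := by rw [Finset.card_erase_of_mem hx, hcard]; omega
    have hbase := ih (a.erase x) hb ((Finset.erase_subset _ _).trans haV) (by omega)
    have hph := phase V d (a.erase x) x ((Finset.erase_subset _ _).trans haV) (haV hx)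
      (Finset.notMem_erase x a) (d - n) (by rw [hb]; omega) hbase
    rwa [Finset.insert_erase hx] at hph

theorem almost_complete_chordal' (V : Finset α) (d : ℕ) (hV : d + 1 ≤ V.card)
    (F : Finset α) (hF : F ∈ V.powersetCard (d + 1)) :
    Chordal V (d + 1) ((V.powersetCard (d + 1)).erase F) := by
  rw [Finset.mem_powersetCard] at hF
  obtain ⟨hFV, hFcard⟩ := hF
  by_cases hV2 : V.card ≤ d + 1
  · have hempty : (V.powersetCard (d+1)).erase F = ∅ := by
      apply Finset.eq_empty_of_forall_notMem
      intro G hG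
      rw [Finset.mem_erase, Finset.mem_powersetCard] at hG
      obtain ⟨hGF, hGV, hGcard⟩ := hG
      apply hGF
      have hGV' : G = V := Finset.eq_of_subset_of_card_le hGV (by omega)
      have hFV' : F = V := Finset.eq_of_subset_of_card_le hFV (by omega)
      rw [hGV', hFV']
    rw [hempty]; exact Chordal.empty
  · push_neg at hV2
    obtain ⟨x, hx⟩ : F.Nonempty := Finset.card_pos.1 (by omega)
    set e₁ := F.erase x with he₁
    have he₁F : e₁ ⊆ F := Finset.erase_subset _ _
    have he₁card : e₁.card = d := by rw [he₁, Finset.card_erase_of_mem hx, hFcard]; omega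
    have hxe₁ : x ∉ e₁ := Finset.notMem_erase _ _
    set C := (V.powersetCard (d+1)).erase F with hC
    have hmemC : ∀ {G : Finset α}, G ∈ C ↔ G ≠ F ∧ G ⊆ V ∧ G.card = d + 1 := by
      intro G
      rw [hC, Finset.mem_erase, Finset.mem_powersetCard]
    obtain ⟨y, hyVF⟩ : (V \ F).Nonempty := by
      rw [Finset.sdiff_nonempty]
      intro hc
      have := Finset.card_le_card hc; omega
    rw [Finset.mem_sdiff] at hyVF
    have hye₁ : y ∉ e₁ := fun hc => hyVF.2 (he₁F hc)
    have hG₁ : insert y e₁ ∈ C := by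
      rw [hmemC]
      refine ⟨fun hc => hyVF.2 (by rw [← hc]; exact Finset.mem_insert_self y e₁), ?_, ?_⟩
      · exact Finset.insert_subset hyVF.1 (he₁F.trans hFV)
      · rw [Finset.card_insert_of_notMem hye₁, he₁card]
    have hdel : delMS C e₁ = Ca V d e₁ := by
      ext G
      rw [delMS, Finset.mem_filter, hmemC, mem_Ca]
      constructor
      · rintro ⟨⟨_, h2, h3⟩, h4⟩; exact ⟨⟨h2, h3⟩, h4⟩
      · rintro ⟨⟨h2, h3⟩, h4⟩
        exact ⟨⟨fun hc => h4 (by rw [hc]; exact he₁F), h2, h3⟩, h4⟩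
    refine Chordal.step e₁ ⟨⟨by omega, ⟨insert y e₁, hG₁, Finset.subset_insert y e₁⟩⟩, ?_⟩
      (by rw [hdel]; exact ca_chordal V d d e₁ he₁card (he₁F.trans hFV) (by omega))
    have hNV : closedNbhd V C e₁ ⊆ V :=
      Finset.union_subset (he₁F.trans hFV) (Finset.filter_subset _ _)
    have hxN : x ∉ closedNbhd V C e₁ := by
      rw [closedNbhd, Finset.mem_union, Finset.mem_filter]
      rintro (h | ⟨_, h⟩)
      · exact hxe₁ h
      · rw [hmemC] at h
        exact h.1 (Finset.insert_erase hx)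
    refine ⟨hNV, fun G hGN hGcard => ?_⟩
    rw [hmemC]
    exact ⟨fun hc => hxN (hGN (by rw [hc]; exact hx)), hGN.trans hNV, hGcard⟩

end LO

/-- The `d`-clutter obtained from the complete clutter on `V` (with
`|V| ≥ d + 1`) by deleting exactly one circuit is chordal. -/
theorem almost_complete_chordal (V : Finset α) (d : ℕ) (hV : d + 1 ≤ V.card)
    (F : Finset α) (hF : F ∈ V.powersetCard (d + 1)) :
    Chordal V (d + 1) ((V.powersetCard (d + 1)).erase F) := by
  letI : LinearOrder α := IsWellOrder.linearOrder WellOrderingRel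
  exact almost_complete_chordal' V d hV F hF

end ClutterPaper
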